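/- In any complex normed space (X, ‖·‖), for every x ∈ X and every real φ one has ⟨e^{i·φ}·x | x⟩ = e^{i·φ}·⟨x|x⟩ = e^{i·φ}·‖x‖². -/

import Mathlib

/-- The continuous product `⟨x|y⟩` in a complex normed space. -/
noncomputable def cprod {X : Type*} [NormedAddCommGroup X] [NormedSpace ℂ X] (x y : X) : ℂ :=
  open scoped Classical in
  if x = 0 ∨ y = 0 then 0
  else
    ((‖x‖ * ‖y‖ : ℝ) : ℂ) * (1 / 4 : ℂ) *
      (((‖((‖x‖⁻¹ : ℝ) : ℂ) • x + ((‖y‖⁻¹ : ℝ) : ℂ) • y‖ ^ 2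
          - ‖((‖x‖⁻¹ : ℝ) : ℂ) • x - ((‖y‖⁻¹ : ℝ) : ℂ) • y‖ ^ 2 : ℝ) : ℂ)
        + Complex.I *
          ((‖((‖x‖⁻¹ : ℝ) : ℂ) • x + Complex.I • (((‖y‖⁻¹ : ℝ) : ℂ) • y)‖ ^ 2
            - ‖((‖x‖⁻¹ : ℝ) : ℂ) • x - Complex.I • (((‖y‖⁻¹ : ℝ) : ℂ) • y)‖ ^ 2 : ℝ) : ℂ))

lemma cprod_key {X : Type*} [NormedAddCommGroup X] [NormedSpace ℂ X] (x : X) (hx : x ≠ 0)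
    (e : ℂ) (he : ‖e‖ = 1) : cprod (e • x) x = e * ((‖x‖ ^ 2 : ℝ) : ℂ) := by
  have he0 : e ≠ 0 := by intro h; simp [h] at he
  have hex : e • x ≠ 0 := smul_ne_zero he0 hx
  have hnx : ‖x‖ ≠ 0 := norm_ne_zero_iff.mpr hx
  have h1 : ‖e • x‖ = ‖x‖ := by rw [norm_smul, he, one_mul]
  have hc : ‖(((‖x‖⁻¹ : ℝ) : ℂ))‖ = ‖x‖⁻¹ := by
    rw [Complex.norm_real, Real.norm_eq_abs, abs_inv, abs_norm]
  have gen : ∀ z w : ℂ, ‖z • x + w • x‖ = ‖z + w‖ * ‖x‖ := by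
    intro z w; rw [← add_smul, norm_smul]
  have gen' : ∀ z w : ℂ, ‖z • x - w • x‖ = ‖z - w‖ * ‖x‖ := by
    intro z w; rw [← sub_smul, norm_smul]
  unfold cprod
  rw [if_neg (by tauto), h1]
  have hsm : ((‖x‖⁻¹ : ℝ) : ℂ) • (e • x) = (((‖x‖⁻¹ : ℝ) : ℂ) * e) • x := smul_smul _ _ _
  have hsm2 : Complex.I • (((‖x‖⁻¹ : ℝ) : ℂ) • x) = (Complex.I * ((‖x‖⁻¹ : ℝ) : ℂ)) • x :=
    smul_smul _ _ _
  rw [hsm, hsm2, gen, gen', gen, gen']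
  have factor : ∀ c : ℂ, ‖((‖x‖⁻¹ : ℝ) : ℂ) * e + c * ((‖x‖⁻¹ : ℝ) : ℂ)‖ * ‖x‖ = ‖e + c‖ := by
    intro c
    have : ((‖x‖⁻¹ : ℝ) : ℂ) * e + c * ((‖x‖⁻¹ : ℝ) : ℂ) = ((‖x‖⁻¹ : ℝ) : ℂ) * (e + c) := by ring
    rw [this, norm_mul, hc]
    field_simp
  have factor' : ∀ c : ℂ, ‖((‖x‖⁻¹ : ℝ) : ℂ) * e - c * ((‖x‖⁻¹ : ℝ) : ℂ)‖ * ‖x‖ = ‖e - c‖ := by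
    intro c
    have : ((‖x‖⁻¹ : ℝ) : ℂ) * e - c * ((‖x‖⁻¹ : ℝ) : ℂ) = ((‖x‖⁻¹ : ℝ) : ℂ) * (e - c) := by ring
    rw [this, norm_mul, hc]
    field_simp
  have e1 : ‖((‖x‖⁻¹ : ℝ) : ℂ) * e + ((‖x‖⁻¹ : ℝ) : ℂ)‖ * ‖x‖ = ‖e + 1‖ := by
    have := factor 1; rwa [one_mul] at this
  have e2 : ‖((‖x‖⁻¹ : ℝ) : ℂ) * e - ((‖x‖⁻¹ : ℝ) : ℂ)‖ * ‖x‖ = ‖e - 1‖ := by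
    have := factor' 1; rwa [one_mul] at this
  rw [e1, e2, factor Complex.I, factor' Complex.I]
  have hsq : ∀ z : ℂ, (‖z‖ : ℝ) ^ 2 = Complex.normSq z := by
    intro z; rw [Complex.sq_norm]
  have hre : e.re ^ 2 + e.im ^ 2 = 1 := by
    have : Complex.normSq e = 1 := by
      rw [← Complex.sq_norm, he]; norm_num
    simpa [Complex.normSq_apply, sq] using this
  rw [hsq, hsq, hsq, hsq]
  simp only [Complex.normSq_apply, Complex.add_re, Complex.add_im, Complex.sub_re,
    Complex.sub_im, Complex.one_re, Complex.one_im, Complex.I_re, Complex.I_im]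
  apply Complex.ext <;>
    simp [Complex.add_re, Complex.add_im, Complex.mul_re, Complex.mul_im,
      ← Complex.ofReal_pow, Complex.ofReal_re, Complex.ofReal_im] <;> nlinarith [hre]

/-- `⟨e^{iφ}·x | x⟩ = e^{iφ}·⟨x|x⟩ = e^{iφ}·‖x‖²` for every `x` and real `φ`. -/
theorem stmt9 {X : Type*} [NormedAddCommGroup X] [NormedSpace ℂ X] (x : X) (φ : ℝ) :
    cprod (Complex.exp (Complex.I * (φ : ℂ)) • x) x
        = Complex.exp (Complex.I * (φ : ℂ)) * cprod x x ∧
    cprod (Complex.exp (Complex.I * (φ : ℂ)) • x) x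
        = Complex.exp (Complex.I * (φ : ℂ)) * ((‖x‖ ^ 2 : ℝ) : ℂ) := by
  by_cases hx : x = 0
  · subst hx
    simp [cprod]
  · have he : ‖Complex.exp (Complex.I * (φ : ℂ))‖ = 1 := by
      rw [mul_comm]
      exact Complex.norm_exp_ofReal_mul_I φ
    have h2 := cprod_key x hx _ he
    have hxx : cprod x x = ((‖x‖ ^ 2 : ℝ) : ℂ) := by
      have := cprod_key x hx 1 (by simp)
      simpa using this
    exact ⟨by rw [h2, hxx], h2⟩
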